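/- For every N ≥ 1, the product of differences h_N(x) = ∏_{1 ≤ i < j ≤ N} (x_j − x_i), viewed as a polynomial function on ℝ^N, is harmonic: ∑_{i=1}^N ∂²h_N/∂x_i² (x) = 0 for all x ∈ ℝ^N. -/

import Mathlib

open MvPolynomial Finset

/-- The product of differences (Vandermonde determinant)
`h_N(x) = ∏_{1 ≤ i < j ≤ N} (x_j − x_i)`. -/
noncomputable def prodDiff (N : ℕ) (x : Fin N → ℝ) : ℝ :=
  ∏ i : Fin N, ∏ j ∈ Finset.Ioi i, (x j - x i)

variable {N : ℕ}

/-- Derivative bridge: one–variable derivative of a multivariate polynomial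
evaluation along a coordinate. -/
lemma hasDerivAt_eval_update (p : MvPolynomial (Fin N) ℝ) (x : Fin N → ℝ) (i : Fin N) (s : ℝ) :
    HasDerivAt (fun t : ℝ => MvPolynomial.eval (Function.update x i t) p)
      (MvPolynomial.eval (Function.update x i s) (MvPolynomial.pderiv i p)) s := by
  induction p using MvPolynomial.induction_on with
  | C a => simpa using hasDerivAt_const s a
  | add p q hp hq => simp only [map_add]; exact hp.add hq
  | mul_X p j hp =>
      by_cases hj : j = i
      · subst hj
        have hf : (fun t => MvPolynomial.eval (Function.update x j t) (p * X j))
            = fun t => MvPolynomial.eval (Function.update x j t) p * t := by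
          funext t; simp
        rw [hf]
        exact (hp.mul (hasDerivAt_id' s)).congr_deriv (by
          simp [pderiv_mul, pderiv_X_self, Function.update_self]; ring)
      · have := hp.mul_const (x j)
        simpa [pderiv_mul, pderiv_X_of_ne hj, Function.update_of_ne hj, mul_comm] using this

lemma deriv_deriv_eval_update (p : MvPolynomial (Fin N) ℝ) (x : Fin N → ℝ) (i : Fin N) :
    deriv (deriv (fun s : ℝ => MvPolynomial.eval (Function.update x i s) p)) (x i)
      = MvPolynomial.eval x (MvPolynomial.pderiv i (MvPolynomial.pderiv i p)) := by
  have h1 : deriv (fun s : ℝ => MvPolynomial.eval (Function.update x i s) p)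
      = fun s : ℝ => MvPolynomial.eval (Function.update x i s) (MvPolynomial.pderiv i p) :=
    funext fun s => (hasDerivAt_eval_update p x i s).deriv
  rw [h1, (hasDerivAt_eval_update (MvPolynomial.pderiv i p) x i (x i)).deriv,
    Function.update_eq_self]

/-- The set of ordered pairs `a < b` as a sigma finset. -/
noncomputable def PS (N : ℕ) : Finset ((_ : Fin N) × Fin N) :=
  Finset.univ.sigma fun a => Finset.Ioi a

/-- The Vandermonde polynomial. -/
noncomputable def Vand (N : ℕ) : MvPolynomial (Fin N) ℝ :=
  ∏ p ∈ PS N, (X p.2 - X p.1)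

lemma prodDiff_eq_eval (y : Fin N → ℝ) :
    prodDiff N y = MvPolynomial.eval y (Vand N) := by
  simp [prodDiff, Vand, PS, Finset.prod_sigma]

/-- Leibniz rule for a derivation applied to a finset product. -/
lemma pderiv_finset_prod {κ : Type*} [DecidableEq κ] (i : Fin N) (t : Finset κ)
    (f : κ → MvPolynomial (Fin N) ℝ) :
    MvPolynomial.pderiv i (∏ j ∈ t, f j)
      = ∑ j ∈ t, (∏ k ∈ t.erase j, f k) * MvPolynomial.pderiv i (f j) := by
  classical
  induction t using Finset.induction_on with
  | empty => simp
  | insert _ _ ha ih =>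
      rename_i a s
      rw [Finset.prod_insert ha, pderiv_mul, ih, Finset.sum_insert ha, Finset.erase_insert ha]
      rw [Finset.mul_sum]
      congr 1
      · ring
      · apply Finset.sum_congr rfl
        intro j hj
        rw [Finset.erase_insert_of_ne (ne_of_mem_of_not_mem hj ha).symm, Finset.prod_insert
          (fun h => ha (Finset.mem_of_mem_erase h))]
        ring

/-- Coefficient of the derivative of a linear factor. -/
noncomputable def dd (N : ℕ) (i : Fin N) (p : (_ : Fin N) × Fin N) : ℝ :=
  (if p.2 = i then 1 else 0) - (if p.1 = i then 1 else 0)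

lemma pderiv_lin (i : Fin N) (p : (_ : Fin N) × Fin N) :
    MvPolynomial.pderiv i (X p.2 - X p.1 : MvPolynomial (Fin N) ℝ) = C (dd N i p) := by
  rw [map_sub, dd]
  by_cases h2 : p.2 = i <;> by_cases h1 : p.1 = i <;>
    simp [h1, h2, pderiv_X_self, pderiv_X_of_ne]

lemma eval_pderiv2_vand (y : Fin N → ℝ) (i : Fin N) :
    MvPolynomial.eval y (MvPolynomial.pderiv i (MvPolynomial.pderiv i (Vand N)))
      = ∑ p ∈ PS N, ∑ q ∈ (PS N).erase p,
          (∏ m ∈ ((PS N).erase p).erase q, (y m.2 - y m.1)) * dd N i q * dd N i p := by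
  rw [Vand, pderiv_finset_prod]
  have h1 : ∀ p ∈ PS N, (∏ k ∈ (PS N).erase p, (X k.2 - X k.1 : MvPolynomial (Fin N) ℝ))
      * MvPolynomial.pderiv i (X p.2 - X p.1 : MvPolynomial (Fin N) ℝ)
      = (∏ k ∈ (PS N).erase p, (X k.2 - X k.1 : MvPolynomial (Fin N) ℝ)) * C (dd N i p) := by
    intro p _; rw [pderiv_lin]
  rw [Finset.sum_congr rfl h1, map_sum, map_sum]
  apply Finset.sum_congr rfl
  intro p _
  rw [pderiv_mul, pderiv_C, mul_zero, add_zero, pderiv_finset_prod, Finset.sum_mul, map_sum]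
  apply Finset.sum_congr rfl
  intro q _
  rw [pderiv_lin]
  simp [MvPolynomial.eval_prod]

lemma sum_sum_erase {κ : Type*} [DecidableEq κ] (s : Finset κ) (f : κ → ℝ) :
    ∑ p ∈ s, ∑ q ∈ s.erase p, f p * f q = (∑ p ∈ s, f p) ^ 2 - ∑ p ∈ s, f p ^ 2 := by
  have h : ∀ p ∈ s, ∑ q ∈ s.erase p, f p * f q = f p * (∑ q ∈ s, f q) - f p ^ 2 := by
    intro p hp
    rw [← Finset.mul_sum, Finset.sum_erase_eq_sub hp, mul_sub, sq]
  rw [Finset.sum_congr rfl h, Finset.sum_sub_distrib, ← Finset.sum_mul, sq]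

lemma sum_r (y : Fin N → ℝ) (i : Fin N) (φ : ℝ → ℝ) (hφ : φ 0 = 0) :
    ∑ p ∈ PS N, φ (dd N i p / (y p.2 - y p.1))
      = ∑ j ∈ Finset.univ.erase i, φ ((y i - y j)⁻¹) := by
  rw [PS, Finset.sum_sigma]
  rw [← Finset.add_sum_erase _ _ (Finset.mem_univ i)]
  have h1 : ∑ b ∈ Finset.Ioi i, φ (dd N i ⟨i, b⟩ / (y b - y i))
      = ∑ b ∈ Finset.Ioi i, φ ((y i - y b)⁻¹) := by
    apply Finset.sum_congr rfl
    intro b hb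
    have hbi : b ≠ i := ne_of_gt (Finset.mem_Ioi.mp hb)
    have : dd N i ⟨i, b⟩ = -1 := by simp [dd, hbi]
    rw [this]
    congr 1
    rw [div_eq_mul_inv, neg_one_mul, ← inv_neg, neg_sub]
  have h2 : ∑ a ∈ Finset.univ.erase i, ∑ b ∈ Finset.Ioi a, φ (dd N i ⟨a, b⟩ / (y b - y a))
      = ∑ a ∈ Finset.Iio i, φ ((y i - y a)⁻¹) := by
    have hinner : ∀ a ∈ Finset.univ.erase i,
        ∑ b ∈ Finset.Ioi a, φ (dd N i ⟨a, b⟩ / (y b - y a))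
          = if a ∈ Finset.Iio i then φ ((y i - y a)⁻¹) else 0 := by
      intro a ha
      have hai : a ≠ i := Finset.ne_of_mem_erase ha
      have : ∀ b ∈ Finset.Ioi a, φ (dd N i ⟨a, b⟩ / (y b - y a))
          = if b = i then φ ((y i - y a)⁻¹) else 0 := by
        intro b hb
        by_cases hbi : b = i
        · have hd : dd N i ⟨a, b⟩ = 1 := by simp [dd, hbi, hai]
          rw [if_pos hbi, hd, hbi, one_div]
        · have hd : dd N i ⟨a, b⟩ = 0 := by simp [dd, hai, hbi]
          rw [if_neg hbi, hd, zero_div, hφ]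
      rw [Finset.sum_congr rfl this, Finset.sum_ite_eq' (Finset.Ioi a) i
        (fun _ => φ ((y i - y a)⁻¹))]
      simp [Finset.mem_Ioi, Finset.mem_Iio]
    rw [Finset.sum_congr rfl hinner]
    rw [Finset.sum_ite_mem]
    congr 1
    rw [Finset.inter_comm, Finset.inter_eq_left]
    intro a ha
    exact Finset.mem_erase.mpr ⟨ne_of_lt (Finset.mem_Iio.mp ha), Finset.mem_univ a⟩
  rw [h1, h2]
  have hsplit : (Finset.univ.erase i : Finset (Fin N)) = Finset.Iio i ∪ Finset.Ioi i := by
    ext j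
    simp only [Finset.mem_erase, Finset.mem_univ, and_true, Finset.mem_union,
      Finset.mem_Iio, Finset.mem_Ioi]
    exact ne_iff_lt_or_gt
  have hdisj : Disjoint (Finset.Iio i) (Finset.Ioi i) :=
    Finset.disjoint_left.mpr fun j hj hj2 =>
      absurd (lt_trans (Finset.mem_Iio.mp hj) (Finset.mem_Ioi.mp hj2)) (lt_irrefl j)
  rw [hsplit, Finset.sum_union hdisj]
  ring

lemma eval_pderiv2_of_injective (y : Fin N → ℝ) (hy : Function.Injective y) (i : Fin N) :
    MvPolynomial.eval y (MvPolynomial.pderiv i (MvPolynomial.pderiv i (Vand N)))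
      = prodDiff N y * ∑ j ∈ Finset.univ.erase i, ∑ k ∈ (Finset.univ.erase i).erase j,
          (y i - y j)⁻¹ * (y i - y k)⁻¹ := by
  have hprod : prodDiff N y = ∏ p ∈ PS N, (y p.2 - y p.1) := by
    simp [prodDiff, PS, Finset.prod_sigma]
  have he : ∀ p ∈ PS N, y p.2 - y p.1 ≠ 0 := by
    intro p hp
    have : p.1 < p.2 := Finset.mem_Ioi.mp (Finset.mem_sigma.mp hp).2
    exact sub_ne_zero.mpr fun h => absurd (hy h) (ne_of_gt this)
  rw [eval_pderiv2_vand]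
  have hterm : ∀ p ∈ PS N, ∀ q ∈ (PS N).erase p,
      (∏ m ∈ ((PS N).erase p).erase q, (y m.2 - y m.1)) * dd N i q * dd N i p
        = prodDiff N y * ((dd N i p / (y p.2 - y p.1)) * (dd N i q / (y q.2 - y q.1))) := by
    intro p hp q hq
    have hq' : q ∈ PS N := Finset.mem_of_mem_erase hq
    have h1 : (∏ m ∈ ((PS N).erase p).erase q, (y m.2 - y m.1)) * (y q.2 - y q.1)
        = ∏ m ∈ (PS N).erase p, (y m.2 - y m.1) :=
      Finset.prod_erase_mul _ _ hq
    have h2 : (∏ m ∈ (PS N).erase p, (y m.2 - y m.1)) * (y p.2 - y p.1)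
        = ∏ m ∈ PS N, (y m.2 - y m.1) :=
      Finset.prod_erase_mul _ _ hp
    rw [hprod, ← h2, ← h1]
    field_simp [he p hp, he q hq']
  calc ∑ p ∈ PS N, ∑ q ∈ (PS N).erase p,
        (∏ m ∈ ((PS N).erase p).erase q, (y m.2 - y m.1)) * dd N i q * dd N i p
      = ∑ p ∈ PS N, ∑ q ∈ (PS N).erase p, prodDiff N y *
          ((dd N i p / (y p.2 - y p.1)) * (dd N i q / (y q.2 - y q.1))) := by
        apply Finset.sum_congr rfl
        intro p hp
        exact Finset.sum_congr rfl (hterm p hp)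
    _ = prodDiff N y * ∑ p ∈ PS N, ∑ q ∈ (PS N).erase p,
          (dd N i p / (y p.2 - y p.1)) * (dd N i q / (y q.2 - y q.1)) := by
        rw [Finset.mul_sum]
        apply Finset.sum_congr rfl
        intro p _
        rw [Finset.mul_sum]
    _ = prodDiff N y * ((∑ p ∈ PS N, dd N i p / (y p.2 - y p.1)) ^ 2
          - ∑ p ∈ PS N, (dd N i p / (y p.2 - y p.1)) ^ 2) := by
        rw [sum_sum_erase]
    _ = prodDiff N y * ((∑ j ∈ Finset.univ.erase i, (y i - y j)⁻¹) ^ 2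
          - ∑ j ∈ Finset.univ.erase i, ((y i - y j)⁻¹) ^ 2) := by
        rw [sum_r y i (fun t => t) rfl, sum_r y i (fun t => t ^ 2) (by norm_num)]
    _ = prodDiff N y * ∑ j ∈ Finset.univ.erase i, ∑ k ∈ (Finset.univ.erase i).erase j,
          (y i - y j)⁻¹ * (y i - y k)⁻¹ := by
        rw [sum_sum_erase]

/-- The set of pairwise–distinct triples. -/
noncomputable def TT (N : ℕ) : Finset (Fin N × Fin N × Fin N) :=
  Finset.univ.filter fun t => t.2.1 ≠ t.1 ∧ t.2.2 ≠ t.1 ∧ t.2.2 ≠ t.2.1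

lemma nested_eq_triple (f : Fin N → Fin N → Fin N → ℝ) :
    ∑ i : Fin N, ∑ j ∈ Finset.univ.erase i, ∑ k ∈ (Finset.univ.erase i).erase j, f i j k
      = ∑ t ∈ TT N, f t.1 t.2.1 t.2.2 := by
  classical
  have h1 : ∀ (s : Finset (Fin N)) (a : Fin N) (g : Fin N → ℝ),
      ∑ j ∈ s.erase a, g j = ∑ j ∈ s, if j ≠ a then g j else 0 := by
    intro s a g
    rw [← Finset.filter_ne', Finset.sum_filter]
  rw [TT, Finset.sum_filter, Fintype.sum_prod_type]
  apply Finset.sum_congr rfl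
  intro i _
  rw [Fintype.sum_prod_type, h1]
  apply Finset.sum_congr rfl
  intro j _
  by_cases hj : j ≠ i
  · rw [if_pos hj, h1, h1]
    apply Finset.sum_congr rfl
    intro k _
    by_cases hk1 : k ≠ i <;> by_cases hk2 : k ≠ j <;> simp [hj, hk1, hk2]
  · rw [if_neg hj]
    symm
    apply Finset.sum_eq_zero
    intro k _
    simp [hj]

lemma triple_sum_zero (y : Fin N → ℝ) (hy : Function.Injective y) :
    ∑ t ∈ TT N, (y t.1 - y t.2.1)⁻¹ * (y t.1 - y t.2.2)⁻¹ = 0 := by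
  classical
  set z : Fin N × Fin N × Fin N → ℝ := fun t => (y t.1 - y t.2.1)⁻¹ * (y t.1 - y t.2.2)⁻¹
    with hz
  set ρ : Fin N × Fin N × Fin N → Fin N × Fin N × Fin N := fun t => (t.2.1, t.2.2, t.1)
    with hρ
  have hmem : ∀ t ∈ TT N, ρ t ∈ TT N := by
    intro t ht
    rw [TT, Finset.mem_filter] at ht ⊢
    obtain ⟨-, h1, h2, h3⟩ := ht
    exact ⟨Finset.mem_univ _, h3, h1.symm, h2.symm⟩
  have hrot : ∀ (g : Fin N × Fin N × Fin N → ℝ),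
      ∑ t ∈ TT N, g (ρ t) = ∑ t ∈ TT N, g t := by
    intro g
    apply Finset.sum_nbij' ρ (fun t => ρ (ρ t))
    · exact hmem
    · intro t ht
      exact hmem _ (hmem _ ht)
    · intro t _
      simp [hρ]
    · intro t _
      simp [hρ]
    · intro t _
      rfl
  have h3 : ∑ t ∈ TT N, (z t + z (ρ t) + z (ρ (ρ t))) = 0 := by
    apply Finset.sum_eq_zero
    intro t ht
    rw [TT, Finset.mem_filter] at ht
    obtain ⟨-, h1, h2, h3⟩ := ht
    obtain ⟨i, j, k⟩ := t
    simp only [hz, hρ]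
    have e1 : y i - y j ≠ 0 := sub_ne_zero.mpr fun h => h1 (hy h.symm)
    have e2 : y i - y k ≠ 0 := sub_ne_zero.mpr fun h => h2 (hy h.symm)
    have e3 : y j - y k ≠ 0 := sub_ne_zero.mpr fun h => h3 (hy h.symm)
    have e4 : y j - y i ≠ 0 := by rw [← neg_sub]; exact neg_ne_zero.mpr e1
    have e5 : y k - y i ≠ 0 := by rw [← neg_sub]; exact neg_ne_zero.mpr e2
    have e6 : y k - y j ≠ 0 := by rw [← neg_sub]; exact neg_ne_zero.mpr e3
    field_simp
    ring
  have e1 := hrot z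
  have e2 := hrot (fun t => z (ρ t))
  rw [Finset.sum_add_distrib, Finset.sum_add_distrib, e2, e1] at h3
  linarith

lemma vand_ne_zero : (Vand N) ≠ 0 := by
  intro h
  have := congrArg (MvPolynomial.eval (fun k : Fin N => (k : ℝ))) h
  rw [map_zero, Vand, MvPolynomial.eval_prod] at this
  apply absurd this
  apply Finset.prod_ne_zero_iff.mpr
  intro p hp
  have hlt : p.1 < p.2 := Finset.mem_Ioi.mp (Finset.mem_sigma.mp hp).2
  simp only [MvPolynomial.eval_X, map_sub]
  have : ((p.1 : ℕ) : ℝ) < ((p.2 : ℕ) : ℝ) := by exact_mod_cast hlt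
  exact sub_ne_zero.mpr (ne_of_gt this)

lemma eval_vand_of_not_injective (y : Fin N → ℝ) (hy : ¬ Function.Injective y) :
    MvPolynomial.eval y (Vand N) = 0 := by
  rw [Function.not_injective_iff] at hy
  obtain ⟨a, b, hab, hne⟩ := hy
  rcases lt_or_gt_of_ne hne with h | h
  · rw [Vand, MvPolynomial.eval_prod]
    apply Finset.prod_eq_zero (i := ⟨a, b⟩)
    · exact Finset.mem_sigma.mpr ⟨Finset.mem_univ _, Finset.mem_Ioi.mpr h⟩
    · simp [hab]
  · rw [Vand, MvPolynomial.eval_prod]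
    apply Finset.prod_eq_zero (i := ⟨b, a⟩)
    · exact Finset.mem_sigma.mpr ⟨Finset.mem_univ _, Finset.mem_Ioi.mpr h⟩
    · simp [hab]

lemma laplacian_vand_zero :
    ∑ i : Fin N, MvPolynomial.pderiv i (MvPolynomial.pderiv i (Vand N)) = 0 := by
  have hQV : (∑ i : Fin N, MvPolynomial.pderiv i (MvPolynomial.pderiv i (Vand N))) * Vand N
      = 0 := by
    apply MvPolynomial.funext
    intro y
    rw [map_zero, map_mul, map_sum]
    by_cases hy : Function.Injective y
    · have : ∀ i ∈ Finset.univ, MvPolynomial.eval y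
          (MvPolynomial.pderiv i (MvPolynomial.pderiv i (Vand N)))
          = prodDiff N y * ∑ j ∈ Finset.univ.erase i, ∑ k ∈ (Finset.univ.erase i).erase j,
              (y i - y j)⁻¹ * (y i - y k)⁻¹ := fun i _ => eval_pderiv2_of_injective y hy i
      rw [Finset.sum_congr rfl this, ← Finset.mul_sum, nested_eq_triple
        (fun i j k => (y i - y j)⁻¹ * (y i - y k)⁻¹), triple_sum_zero y hy]
      ring
    · rw [eval_vand_of_not_injective y hy]
      ring
  rcases mul_eq_zero.mp hQV with h | h
  · exact h
  · exact absurd h vand_ne_zero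

theorem statement_9 (N : ℕ) (hN : 1 ≤ N) (x : Fin N → ℝ) :
    ∑ i : Fin N, deriv (deriv (fun s : ℝ => prodDiff N (Function.update x i s))) (x i) = 0 := by
  have key : ∀ i : Fin N, deriv (deriv (fun s : ℝ => prodDiff N (Function.update x i s))) (x i)
      = MvPolynomial.eval x (MvPolynomial.pderiv i (MvPolynomial.pderiv i (Vand N))) := by
    intro i
    have hfun : (fun s : ℝ => prodDiff N (Function.update x i s))
        = fun s : ℝ => MvPolynomial.eval (Function.update x i s) (Vand N) :=
      funext fun s => prodDiff_eq_eval _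
    rw [hfun, deriv_deriv_eval_update]
  rw [Finset.sum_congr rfl fun i _ => key i, ← map_sum, laplacian_vand_zero, map_zero]
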